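/- Fix m₀ with 0 ≤ m₀ ≤ m, and t with d ≤ 2m+1, t = ⌊(d−1)/2⌋. Any code C in the SECC space S(m,L,w) with minimum Hamming distance d satisfies |C| ≤ B(L,w−1)^{m₀}·B(L,w)^{m−m₀} / [ Σ_{t₁+t₂ ≤ t} C(m₀,t₁)·C(m−m₀,t₂)·L^{t₁}·(L−w)^{t₂} ], where B(L,v) = Σ_{j=v}^{L} C(L,j). -/

import Mathlib

open Finset

/-- The Hamming weight of a length-`L` binary subblock. -/
def wt {L : ℕ} (b : Fin L → Bool) : ℕ :=
  (Finset.univ.filter (fun j => b j = true)).card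

/-- Hamming distance between two binary words of length `mL`, given as `m`
subblocks of length `L`. -/
def hdist {m L : ℕ} (x y : Fin m → Fin L → Bool) : ℕ :=
  ∑ i, hammingDist (x i) (y i)

/-- `B(L, v) = Σ_{j=v}^{L} C(L, j)`. -/
def bge (L v : ℕ) : ℕ := ∑ j ∈ Finset.Icc v L, Nat.choose L j

section AuxLemmas

lemma wt_le {L : ℕ} (b : Fin L → Bool) : wt b ≤ L := by
  classical
  simpa [wt] using (Finset.card_filter_le Finset.univ (fun j => b j = true))

lemma wt_update_ge {L : ℕ} (b : Fin L → Bool) (j : Fin L) (v : Bool) :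
    wt b ≤ wt (Function.update b j v) + 1 := by
  classical
  have h : ((Finset.univ : Finset (Fin L)).filter fun x => b x = true)
      ⊆ insert j ((Finset.univ : Finset (Fin L)).filter fun x => Function.update b j v x = true) := by
    intro x hx
    by_cases hxj : x = j
    · simp [hxj]
    · simp only [mem_insert, mem_filter, mem_univ, true_and] at hx ⊢
      right; rw [Function.update_of_ne hxj]; exact hx
  calc wt b ≤ (insert j ((Finset.univ : Finset (Fin L)).filter
        fun x => Function.update b j v x = true)).card := Finset.card_le_card h
    _ ≤ _ + 1 := Finset.card_insert_le _ _

lemma wt_update_true {L : ℕ} (b : Fin L → Bool) (j : Fin L) (h : b j = false) :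
    wt (Function.update b j true) = wt b + 1 := by
  classical
  have he : ((Finset.univ : Finset (Fin L)).filter fun x => Function.update b j true x = true)
      = insert j ((Finset.univ : Finset (Fin L)).filter fun x => b x = true) := by
    ext x
    by_cases hxj : x = j
    · simp [hxj]
    · simp [hxj, Function.update_of_ne hxj]
  rw [wt, he, Finset.card_insert_of_notMem (by simp [h]), wt]

lemma hammingDist_update_le {L : ℕ} (b : Fin L → Bool) (j : Fin L) (v : Bool) :
    hammingDist b (Function.update b j v) ≤ 1 := by
  classical
  have h : ((Finset.univ : Finset (Fin L)).filter fun x => b x ≠ Function.update b j v x) ⊆ {j} := by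
    intro x hx
    simp only [mem_filter, mem_univ, true_and, ne_eq] at hx
    by_contra hxj
    exact hx (by rw [Function.update_of_ne (by simpa using hxj)])
  simpa [hammingDist] using Finset.card_le_card h

lemma card_wt_eq {L j : ℕ} :
    ((Finset.univ : Finset (Fin L → Bool)).filter fun b => wt b = j).card = Nat.choose L j := by
  classical
  have := Finset.card_bij' (s := (Finset.univ : Finset (Fin L → Bool)).filter fun b => wt b = j)
    (t := Finset.powersetCard j (Finset.univ : Finset (Fin L)))
    (fun b _ => Finset.univ.filter fun x => b x = true)
    (fun s _ => fun x => x ∈ s)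
    (by intro b hb
        simp only [mem_filter, mem_univ, true_and] at hb
        simp [Finset.mem_powersetCard, ← hb, wt])
    (by intro s hs
        rw [Finset.mem_powersetCard] at hs
        simp only [mem_filter, mem_univ, true_and]
        rw [← hs.2, wt]
        congr 1
        ext x; simp)
    (by intro b hb; funext x; simp)
    (by intro s hs; ext x; simp)
  rw [this, Finset.card_powersetCard, Finset.card_univ, Fintype.card_fin]

lemma card_wt_ge {L v : ℕ} :
    ((Finset.univ : Finset (Fin L → Bool)).filter fun b => v ≤ wt b).card = bge L v := by
  classical
  rw [Finset.card_eq_sum_card_fiberwise (f := fun b => wt b) (t := Finset.Icc v L)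
    (by intro b hb
        simp only [Finset.mem_coe, mem_filter, mem_univ, true_and] at hb
        exact Finset.mem_Icc.2 ⟨hb, wt_le b⟩)]
  refine Finset.sum_congr rfl fun j hj => ?_
  rw [Finset.filter_filter]
  rw [Finset.mem_Icc] at hj
  have : ∀ b : Fin L → Bool, (v ≤ wt b ∧ wt b = j) ↔ wt b = j := by
    intro b; constructor
    · exact fun h => h.2
    · intro h; exact ⟨by omega, h⟩
  rw [Finset.filter_congr (fun b _ => this b), card_wt_eq]

lemma card_filter_val_lt {m m₀ : ℕ} (h : m₀ ≤ m) :
    ((Finset.univ : Finset (Fin m)).filter fun i : Fin m => (i : ℕ) < m₀).card = m₀ := by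
  classical
  have h1 : ((Finset.univ : Finset (Fin m)).map Fin.valEmbedding).filter (fun x => x < m₀)
      = (Finset.univ.filter fun i : Fin m => (i : ℕ) < m₀).map Fin.valEmbedding :=
    Finset.filter_map
  have h2 : (Finset.Iio m).filter (fun x => x < m₀) = Finset.Iio m₀ := by
    ext x; simp only [Finset.mem_filter, Finset.mem_Iio]; omega
  have := congrArg Finset.card h1
  rw [Fin.map_valEmbedding_univ, h2, Finset.card_map] at this
  rw [← this, Nat.card_Iio]

lemma card_filter_val_not_lt {m m₀ : ℕ} (h : m₀ ≤ m) :
    ((Finset.univ : Finset (Fin m)).filter fun i : Fin m => ¬ (i : ℕ) < m₀).card = m - m₀ := by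
  classical
  have := Finset.card_filter_add_card_filter_not (s := (Finset.univ : Finset (Fin m)))
    (p := fun i : Fin m => (i : ℕ) < m₀)
  rw [card_filter_val_lt h, Finset.card_univ, Fintype.card_fin] at this
  omega

lemma prod_ite_pow {M : Type*} [CommMonoid M] {m m₀ : ℕ} (h : m₀ ≤ m) (a b : M) :
    (∏ i : Fin m, if (i : ℕ) < m₀ then a else b) = a ^ m₀ * b ^ (m - m₀) := by
  classical
  rw [Finset.prod_ite, Finset.prod_const, Finset.prod_const, card_filter_val_lt h,
    card_filter_val_not_lt h]

lemma card_piOption {m L t : ℕ} (K : Fin m → Finset (Fin L)) :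
    (((Fintype.piFinset fun i => insert none ((K i).image some)).filter
        (fun g : Fin m → Option (Fin L) =>
          ((Finset.univ : Finset (Fin m)).filter fun i => g i ≠ none).card ≤ t)).card)
      = ∑ S ∈ (Finset.univ : Finset (Fin m)).powerset.filter (fun S => S.card ≤ t),
          ∏ i ∈ S, (K i).card := by
  classical
  rw [Finset.card_eq_sum_card_fiberwise
    (f := fun g : Fin m → Option (Fin L) => (Finset.univ : Finset (Fin m)).filter fun i => g i ≠ none)
    (t := (Finset.univ : Finset (Fin m)).powerset.filter (fun S => S.card ≤ t))
    (by intro g hg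
        simp only [Finset.mem_coe, Finset.mem_filter] at hg ⊢
        exact ⟨Finset.mem_powerset.2 (Finset.filter_subset _ _), hg.2⟩)]
  refine Finset.sum_congr rfl fun S hS => ?_
  simp only [Finset.mem_filter, Finset.mem_powerset] at hS
  have hfib : (((Fintype.piFinset fun i => insert none ((K i).image some)).filter
        (fun g : Fin m → Option (Fin L) =>
          ((Finset.univ : Finset (Fin m)).filter fun i => g i ≠ none).card ≤ t)).filter
        (fun g => ((Finset.univ : Finset (Fin m)).filter fun i => g i ≠ none) = S))
      = Fintype.piFinset (fun i => if i ∈ S then (K i).image some else {none}) := by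
    ext g
    simp only [Finset.mem_filter, Fintype.mem_piFinset, Finset.mem_insert]
    constructor
    · rintro ⟨⟨hmem, -⟩, hsupp⟩
      intro i
      by_cases hi : i ∈ S
      · simp only [hi, if_true]
        rcases hmem i with h0 | h1
        · exfalso
          rw [← hsupp] at hi
          simp only [Finset.mem_filter] at hi
          exact hi.2 h0
        · exact h1
      · simp only [hi, if_false, Finset.mem_singleton]
        rw [← hsupp] at hi
        simp only [Finset.mem_filter, Finset.mem_univ, true_and, not_not] at hi
        exact hi
    · intro hmem
      have hsupp : ((Finset.univ : Finset (Fin m)).filter fun i => g i ≠ none) = S := by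
        ext i
        simp only [Finset.mem_filter, Finset.mem_univ, true_and]
        constructor
        · intro hne
          by_contra hi
          have := hmem i
          simp only [hi, if_false, Finset.mem_singleton] at this
          exact hne this
        · intro hi
          have := hmem i
          simp only [hi, if_true, Finset.mem_image] at this
          rcases this with ⟨j, -, hj⟩
          rw [← hj]; simp
      refine ⟨⟨fun i => ?_, by rw [hsupp]; exact hS.2⟩, hsupp⟩
      by_cases hi : i ∈ S
      · have := hmem i; simp only [hi, if_true] at this; exact Or.inr this
      · have := hmem i; simp only [hi, if_false, Finset.mem_singleton] at this; exact Or.inl this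
  rw [hfib, Fintype.card_piFinset]
  have : ∀ i : Fin m, ((if i ∈ S then (K i).image some else {none}) : Finset (Option (Fin L))).card
      = if i ∈ S then (K i).card else 1 := by
    intro i
    by_cases hi : i ∈ S
    · simp [hi, Finset.card_image_of_injective _ (Option.some_injective _)]
    · simp [hi]
  simp_rw [this]
  rw [Finset.prod_ite_mem]
  rw [Finset.univ_inter]

lemma fiber_card {m m₀ t : ℕ} (hm₀ : m₀ ≤ m) (p : ℕ × ℕ) (hp : p.1 + p.2 ≤ t) :
    ((((Finset.univ : Finset (Fin m)).powerset.filter (fun S => S.card ≤ t)).filter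
        (fun S => ((S.filter fun i : Fin m => (i : ℕ) < m₀).card,
                   (S.filter fun i : Fin m => ¬ (i : ℕ) < m₀).card) = p)).card)
      = Nat.choose m₀ p.1 * Nat.choose (m - m₀) p.2 := by
  classical
  have key : ((((Finset.univ : Finset (Fin m)).powerset.filter (fun S => S.card ≤ t)).filter
        (fun S => ((S.filter fun i : Fin m => (i : ℕ) < m₀).card,
                   (S.filter fun i : Fin m => ¬ (i : ℕ) < m₀).card) = p)).card)
      = ((Finset.powersetCard p.1
            ((Finset.univ : Finset (Fin m)).filter fun i : Fin m => (i : ℕ) < m₀)) ×ˢ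
         (Finset.powersetCard p.2
            ((Finset.univ : Finset (Fin m)).filter fun i : Fin m => ¬ (i : ℕ) < m₀))).card := by
    refine Finset.card_bij'
      (fun S _ => ((S.filter fun i : Fin m => (i : ℕ) < m₀),
                   (S.filter fun i : Fin m => ¬ (i : ℕ) < m₀)))
      (fun q _ => q.1 ∪ q.2) ?_ ?_ ?_ ?_
    · intro S hS
      rw [Finset.mem_filter] at hS
      have h1 : (S.filter fun i : Fin m => (i : ℕ) < m₀).card = p.1 :=
        congrArg Prod.fst hS.2
      have h2 : (S.filter fun i : Fin m => ¬ (i : ℕ) < m₀).card = p.2 :=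
        congrArg Prod.snd hS.2
      rw [Finset.mem_product, Finset.mem_powersetCard, Finset.mem_powersetCard]
      refine ⟨⟨?_, h1⟩, ?_, h2⟩
      · intro i hi
        rw [Finset.mem_filter] at hi ⊢
        exact ⟨Finset.mem_univ _, hi.2⟩
      · intro i hi
        rw [Finset.mem_filter] at hi ⊢
        exact ⟨Finset.mem_univ _, hi.2⟩
    · intro q hq
      rw [Finset.mem_product, Finset.mem_powersetCard, Finset.mem_powersetCard] at hq
      obtain ⟨⟨hq1s, hq1c⟩, hq2s, hq2c⟩ := hq
      have ha : ∀ i ∈ q.1, (i : ℕ) < m₀ := fun i hi => (Finset.mem_filter.1 (hq1s hi)).2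
      have hb : ∀ i ∈ q.2, ¬ (i : ℕ) < m₀ := fun i hi => (Finset.mem_filter.1 (hq2s hi)).2
      have hdisj : Disjoint q.1 q.2 := by
        rw [Finset.disjoint_left]
        intro i h1 h2; exact hb i h2 (ha i h1)
      have hf1 : (q.1 ∪ q.2).filter (fun i : Fin m => (i : ℕ) < m₀) = q.1 := by
        rw [Finset.filter_union, Finset.filter_true_of_mem ha,
          Finset.filter_false_of_mem hb, Finset.union_empty]
      have hf2 : (q.1 ∪ q.2).filter (fun i : Fin m => ¬ (i : ℕ) < m₀) = q.2 := by
        rw [Finset.filter_union, Finset.filter_false_of_mem (fun i hi => not_not_intro (ha i hi)),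
          Finset.filter_true_of_mem hb, Finset.empty_union]
      rw [Finset.mem_filter, Finset.mem_filter, Finset.mem_powerset]
      refine ⟨⟨Finset.subset_univ _, ?_⟩, ?_⟩
      · rw [Finset.card_union_of_disjoint hdisj, hq1c, hq2c]; exact hp
      · rw [hf1, hf2, hq1c, hq2c]
    · intro S hS
      exact Finset.filter_union_filter_not_eq _ S
    · intro q hq
      rw [Finset.mem_product, Finset.mem_powersetCard, Finset.mem_powersetCard] at hq
      obtain ⟨⟨hq1s, hq1c⟩, hq2s, hq2c⟩ := hq
      have ha : ∀ i ∈ q.1, (i : ℕ) < m₀ := fun i hi => (Finset.mem_filter.1 (hq1s hi)).2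
      have hb : ∀ i ∈ q.2, ¬ (i : ℕ) < m₀ := fun i hi => (Finset.mem_filter.1 (hq2s hi)).2
      have hf1 : (q.1 ∪ q.2).filter (fun i : Fin m => (i : ℕ) < m₀) = q.1 := by
        rw [Finset.filter_union, Finset.filter_true_of_mem ha,
          Finset.filter_false_of_mem hb, Finset.union_empty]
      have hf2 : (q.1 ∪ q.2).filter (fun i : Fin m => ¬ (i : ℕ) < m₀) = q.2 := by
        rw [Finset.filter_union, Finset.filter_false_of_mem (fun i hi => not_not_intro (ha i hi)),
          Finset.filter_true_of_mem hb, Finset.empty_union]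
      exact Prod.ext hf1 hf2
  rw [key, Finset.card_product, Finset.card_powersetCard, Finset.card_powersetCard,
    card_filter_val_lt hm₀, card_filter_val_not_lt hm₀]

lemma sum_ge {m m₀ L w t : ℕ} (hm₀ : m₀ ≤ m) (k : Fin m → ℕ)
    (hkH : ∀ i : Fin m, (i : ℕ) < m₀ → L ≤ k i)
    (hkT : ∀ i : Fin m, ¬ (i : ℕ) < m₀ → L - w ≤ k i) :
    (∑ t₁ ∈ Finset.range (t + 1), ∑ t₂ ∈ Finset.range (t + 1 - t₁),
        Nat.choose m₀ t₁ * Nat.choose (m - m₀) t₂ * L ^ t₁ * (L - w) ^ t₂)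
      ≤ ∑ S ∈ (Finset.univ : Finset (Fin m)).powerset.filter (fun S => S.card ≤ t),
          ∏ i ∈ S, k i := by
  classical
  set P := (Finset.univ : Finset (Fin m)).powerset.filter (fun S => S.card ≤ t) with hP
  set pairs := ((Finset.range (t + 1)) ×ˢ (Finset.range (t + 1))).filter
      (fun q : ℕ × ℕ => q.1 + q.2 ≤ t) with hpairs
  have hmaps : ∀ S ∈ P, ((S.filter fun i : Fin m => (i : ℕ) < m₀).card,
      (S.filter fun i : Fin m => ¬ (i : ℕ) < m₀).card) ∈ pairs := by
    intro S hS
    rw [hP, Finset.mem_filter] at hS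
    have hsum := Finset.card_filter_add_card_filter_not
      (s := S) (p := fun i : Fin m => (i : ℕ) < m₀)
    rw [hpairs, Finset.mem_filter, Finset.mem_product, Finset.mem_range, Finset.mem_range]
    refine ⟨⟨?_, ?_⟩, ?_⟩ <;> simp only <;> omega
  have hstep2 : ∑ S ∈ P, L ^ (S.filter fun i : Fin m => (i : ℕ) < m₀).card
        * (L - w) ^ (S.filter fun i : Fin m => ¬ (i : ℕ) < m₀).card
      = ∑ q ∈ pairs, Nat.choose m₀ q.1 * Nat.choose (m - m₀) q.2 * (L ^ q.1 * (L - w) ^ q.2) := by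
    rw [← Finset.sum_fiberwise_of_maps_to hmaps]
    refine Finset.sum_congr rfl fun q hq => ?_
    have hconst : ∀ S ∈ P.filter (fun S => ((S.filter fun i : Fin m => (i : ℕ) < m₀).card,
        (S.filter fun i : Fin m => ¬ (i : ℕ) < m₀).card) = q),
        L ^ (S.filter fun i : Fin m => (i : ℕ) < m₀).card
          * (L - w) ^ (S.filter fun i : Fin m => ¬ (i : ℕ) < m₀).card
        = L ^ q.1 * (L - w) ^ q.2 := by
      intro S hS
      rw [Finset.mem_filter] at hS
      rw [← hS.2]
    rw [Finset.sum_congr rfl hconst, Finset.sum_const, smul_eq_mul]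
    rw [hpairs, Finset.mem_filter] at hq
    rw [hP, fiber_card hm₀ q hq.2]
  have hstep1 : ∑ S ∈ P, L ^ (S.filter fun i : Fin m => (i : ℕ) < m₀).card
        * (L - w) ^ (S.filter fun i : Fin m => ¬ (i : ℕ) < m₀).card
      ≤ ∑ S ∈ P, ∏ i ∈ S, k i := by
    refine Finset.sum_le_sum fun S _ => ?_
    rw [← Finset.prod_filter_mul_prod_filter_not S (fun i : Fin m => (i : ℕ) < m₀) k]
    refine Nat.mul_le_mul ?_ ?_
    · calc L ^ (S.filter fun i : Fin m => (i : ℕ) < m₀).card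
          = ∏ _i ∈ S.filter fun i : Fin m => (i : ℕ) < m₀, L := by rw [Finset.prod_const]
        _ ≤ ∏ i ∈ S.filter fun i : Fin m => (i : ℕ) < m₀, k i :=
          Finset.prod_le_prod' fun i hi => hkH i (Finset.mem_filter.1 hi).2
    · calc (L - w) ^ (S.filter fun i : Fin m => ¬ (i : ℕ) < m₀).card
          = ∏ _i ∈ S.filter fun i : Fin m => ¬ (i : ℕ) < m₀, (L - w) := by
            rw [Finset.prod_const]
        _ ≤ ∏ i ∈ S.filter fun i : Fin m => ¬ (i : ℕ) < m₀, k i :=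
          Finset.prod_le_prod' fun i hi => hkT i (Finset.mem_filter.1 hi).2
  have hstep3 : (∑ t₁ ∈ Finset.range (t + 1), ∑ t₂ ∈ Finset.range (t + 1 - t₁),
        Nat.choose m₀ t₁ * Nat.choose (m - m₀) t₂ * L ^ t₁ * (L - w) ^ t₂)
      = ∑ q ∈ pairs, Nat.choose m₀ q.1 * Nat.choose (m - m₀) q.2 * (L ^ q.1 * (L - w) ^ q.2) := by
    rw [hpairs, Finset.sum_filter, Finset.sum_product]
    refine Finset.sum_congr rfl fun t₁ ht₁ => ?_
    rw [← Finset.sum_filter]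
    have hr : (Finset.range (t + 1)).filter (fun t₂ => t₁ + t₂ ≤ t) = Finset.range (t + 1 - t₁) := by
      ext x
      rw [Finset.mem_range] at ht₁
      simp only [Finset.mem_filter, Finset.mem_range]
      omega
    rw [hr]
    exact Finset.sum_congr rfl fun t₂ _ => by ring
  rw [hstep3, ← hstep2]
  exact hstep1

lemma hdist_triangle {m L : ℕ} (x y z : Fin m → Fin L → Bool) :
    hdist x z ≤ hdist x y + hdist y z := by
  rw [hdist, hdist, hdist, ← Finset.sum_add_distrib]
  exact Finset.sum_le_sum fun i _ => hammingDist_triangle (x i) (y i) (z i)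

lemma hdist_eq_zero {m L : ℕ} {x y : Fin m → Fin L → Bool} (h : hdist x y = 0) : x = y := by
  rw [hdist, Finset.sum_eq_zero_iff] at h
  funext i
  exact hammingDist_eq_zero.1 (h i (Finset.mem_univ i))

end AuxLemmas

/-- Proposition 13: sphere-packing bound for subblock energy-constrained
codes. For `d ≤ 2m+1`, `0 ≤ m₀ ≤ m` and `t = ⌊(d-1)/2⌋`, every code in
`S(m,L,w)` with minimum Hamming distance `d` satisfies
`|C| ≤ B(L,w-1)^{m₀}·B(L,w)^{m-m₀} / Σ_{t₁+t₂≤t} C(m₀,t₁)C(m-m₀,t₂)L^{t₁}(L-w)^{t₂}`. -/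
theorem stmt_15 (m L w d m₀ : ℕ) (hw1 : 1 ≤ w) (hw2 : w ≤ L)
    (hm₀ : m₀ ≤ m) (hd : d ≤ 2 * m + 1)
    (C : Finset (Fin m → Fin L → Bool))
    (hC : ∀ c ∈ C, ∀ i, w ≤ wt (c i))
    (hmin : ∀ x ∈ C, ∀ y ∈ C, x ≠ y → d ≤ hdist x y) :
    (C.card : ℚ) ≤
      ((bge L (w - 1) : ℚ) ^ m₀ * (bge L w : ℚ) ^ (m - m₀)) /
        ((∑ t₁ ∈ Finset.range ((d - 1) / 2 + 1),
            ∑ t₂ ∈ Finset.range ((d - 1) / 2 + 1 - t₁),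
              Nat.choose m₀ t₁ * Nat.choose (m - m₀) t₂ * L ^ t₁ * (L - w) ^ t₂ : ℕ) : ℚ) := by
  classical
  set t := (d - 1) / 2 with ht
  set τ : Fin m → ℕ := fun i => if (i : ℕ) < m₀ then w - 1 else w with hτ
  set A := Fintype.piFinset (fun i : Fin m =>
    (Finset.univ : Finset (Fin L → Bool)).filter fun b => τ i ≤ wt b) with hA
  set D := ∑ t₁ ∈ Finset.range (t + 1), ∑ t₂ ∈ Finset.range (t + 1 - t₁),
      Nat.choose m₀ t₁ * Nat.choose (m - m₀) t₂ * L ^ t₁ * (L - w) ^ t₂ with hD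
  -- cardinality of the ambient space
  have hAcard : A.card = bge L (w - 1) ^ m₀ * bge L w ^ (m - m₀) := by
    rw [hA, Fintype.card_piFinset]
    have : ∀ i : Fin m, ((Finset.univ : Finset (Fin L → Bool)).filter fun b => τ i ≤ wt b).card
        = if (i : ℕ) < m₀ then bge L (w - 1) else bge L w := by
      intro i
      rw [hτ]
      by_cases hi : (i : ℕ) < m₀ <;> simp only [hi, if_true, if_false] <;> exact card_wt_ge
    simp_rw [this]
    exact prod_ite_pow hm₀ _ _
  -- balls
  set U : (Fin m → Fin L → Bool) → Finset (Fin m → Fin L → Bool) :=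
    fun c => A.filter (fun z => hdist c z ≤ t) with hU
  -- lower bound on each ball
  have hball : ∀ c ∈ C, D ≤ (U c).card := by
    intro c hc
    set K : Fin m → Finset (Fin L) := fun i =>
      (Finset.univ : Finset (Fin L)).filter fun j =>
        τ i ≤ wt (Function.update (c i) j (!(c i j))) with hK
    -- sizes of allowed-flip sets
    have hkH : ∀ i : Fin m, (i : ℕ) < m₀ → L ≤ (K i).card := by
      intro i hi
      have : K i = Finset.univ := by
        rw [hK]
        refine Finset.filter_true_of_mem fun j _ => ?_
        have h1 := wt_update_ge (c i) j (!(c i j))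
        have h2 := hC c hc i
        rw [hτ]; simp only [hi, if_true]
        omega
      rw [this, Finset.card_univ, Fintype.card_fin]
    have hkT : ∀ i : Fin m, ¬ (i : ℕ) < m₀ → L - w ≤ (K i).card := by
      intro i hi
      have hτi : τ i = w := by rw [hτ]; simp [hi]
      by_cases hgt : w < wt (c i)
      · have : K i = Finset.univ := by
          rw [hK]
          refine Finset.filter_true_of_mem fun j _ => ?_
          have h1 := wt_update_ge (c i) j (!(c i j))
          rw [hτi]
          omega
        rw [this, Finset.card_univ, Fintype.card_fin]
        omega
      · have hwt : wt (c i) = w := le_antisymm (not_lt.1 hgt) (hC c hc i)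
        have hsub : ((Finset.univ : Finset (Fin L)).filter fun j => c i j = false) ⊆ K i := by
          intro j hj
          rw [Finset.mem_filter] at hj
          rw [hK, Finset.mem_filter]
          refine ⟨Finset.mem_univ _, ?_⟩
          rw [hj.2]
          show τ i ≤ wt (Function.update (c i) j true)
          rw [wt_update_true (c i) j hj.2, hwt, hτi]
          omega
        have hcard : ((Finset.univ : Finset (Fin L)).filter fun j => c i j = false).card = L - w := by
          have heq : ((Finset.univ : Finset (Fin L)).filter fun j => ¬ c i j = true)
              = (Finset.univ : Finset (Fin L)).filter fun j => c i j = false := by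
            refine Finset.filter_congr fun j _ => ?_
            simp [Bool.not_eq_true]
          have := Finset.card_filter_add_card_filter_not
            (s := (Finset.univ : Finset (Fin L))) (p := fun j => c i j = true)
          rw [heq, Finset.card_univ, Fintype.card_fin] at this
          have hwtc : ((Finset.univ : Finset (Fin L)).filter fun j => c i j = true).card = w := by
            rw [← hwt]; rfl
          omega
        calc L - w = _ := hcard.symm
          _ ≤ (K i).card := Finset.card_le_card hsub
    -- the flip map
    set Φ : (Fin m → Option (Fin L)) → (Fin m → Fin L → Bool) :=
      fun g i => Option.elim (g i) (c i) (fun j => Function.update (c i) j (!(c i j))) with hΦ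
    set G := (Fintype.piFinset fun i => insert none ((K i).image some)).filter
        (fun g : Fin m → Option (Fin L) =>
          ((Finset.univ : Finset (Fin m)).filter fun i => g i ≠ none).card ≤ t) with hG
    have hmapsto : ∀ g ∈ G, Φ g ∈ U c := by
      intro g hg
      rw [hG, Finset.mem_filter, Fintype.mem_piFinset] at hg
      obtain ⟨hmem, hsupp⟩ := hg
      rw [hU, Finset.mem_filter]
      constructor
      · rw [hA, Fintype.mem_piFinset]
        intro i
        rw [Finset.mem_filter]
        refine ⟨Finset.mem_univ _, ?_⟩
        rcases hoi : g i with _ | j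
        · rw [hΦ]; simp only [hoi, Option.elim]
          have h2 := hC c hc i
          have hτw : τ i ≤ w := by
            by_cases hh : (i : ℕ) < m₀
            · simp only [hτ, hh, if_true]; omega
            · simp only [hτ, hh, if_false]; omega
          omega
        · have := hmem i
          rw [hoi, Finset.mem_insert] at this
          rcases this with h0 | h1
          · exact absurd h0 (by simp)
          · rw [Finset.mem_image] at h1
            obtain ⟨j', hj', hjj⟩ := h1
            have hj'j : j' = j := by simpa using hjj
            rw [hj'j] at hj'
            rw [hK, Finset.mem_filter] at hj'
            rw [hΦ]; simp only [hoi, Option.elim]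
            exact hj'.2
      · have hle : ∀ i : Fin m, hammingDist (c i) (Φ g i) ≤ if g i = none then 0 else 1 := by
          intro i
          rcases hoi : g i with _ | j
          · rw [hΦ]
            simp [hoi]
          · rw [hΦ]
            simp only [hoi, Option.elim]
            simpa using hammingDist_update_le (c i) j (!(c i j))
        calc hdist c (Φ g) ≤ ∑ i : Fin m, if g i = none then 0 else 1 :=
              Finset.sum_le_sum fun i _ => hle i
          _ = ((Finset.univ : Finset (Fin m)).filter fun i => g i ≠ none).card := by
              rw [Finset.sum_ite, Finset.sum_const, Finset.sum_const, smul_eq_mul, smul_eq_mul]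
              simp only [mul_zero, mul_one, zero_add]
          _ ≤ t := hsupp
    have hinj : Set.InjOn Φ G := by
      intro g hg g' hg' heq
      funext i
      have heqi : Φ g i = Φ g' i := congrFun heq i
      rcases hoi : g i with _ | j <;> rcases hoi' : g' i with _ | j'
      · rfl
      · exfalso
        rw [hΦ] at heqi; simp only [hoi, hoi', Option.elim] at heqi
        have hcontra := congrFun heqi j'
        rw [Function.update_self] at hcontra
        simp at hcontra
      · exfalso
        rw [hΦ] at heqi; simp only [hoi, hoi', Option.elim] at heqi
        have hcontra := congrFun heqi j
        rw [Function.update_self] at hcontra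
        simp at hcontra
      · by_cases hjj : j = j'
        · rw [hjj]
        · exfalso
          rw [hΦ] at heqi; simp only [hoi, hoi', Option.elim] at heqi
          have hcontra := congrFun heqi j
          rw [Function.update_of_ne hjj] at hcontra
          simp at hcontra
    have hGcard : G.card ≤ (U c).card := Finset.card_le_card_of_injOn Φ hmapsto hinj
    have hGeq : G.card = ∑ S ∈ (Finset.univ : Finset (Fin m)).powerset.filter
        (fun S => S.card ≤ t), ∏ i ∈ S, (K i).card := by
      rw [hG]; exact card_piOption K
    have hDle : D ≤ G.card := by
      rw [hGeq, hD]
      exact sum_ge hm₀ _ hkH hkT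
    omega
  -- disjointness of balls
  have hdisj : ∀ c ∈ C, ∀ c' ∈ C, c ≠ c' → Disjoint (U c) (U c') := by
    intro c hc c' hc' hne
    rw [Finset.disjoint_left]
    intro z hz hz'
    rw [hU, Finset.mem_filter] at hz hz'
    have h1 : d ≤ hdist c c' := hmin c hc c' hc' hne
    have h2 : hdist c c' ≤ t + t := by
      calc hdist c c' ≤ hdist c z + hdist z c' := hdist_triangle c z c'
        _ ≤ t + t := by
          have : hdist z c' = hdist c' z := by
            rw [hdist, hdist]
            exact Finset.sum_congr rfl fun i _ => hammingDist_comm _ _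
          rw [this]
          exact Nat.add_le_add hz.2 hz'.2
    have h3 : hdist c c' ≠ 0 := fun h0 => hne (hdist_eq_zero h0)
    rw [ht] at h2
    omega
  -- packing
  have hpack : C.card * D ≤ A.card := by
    calc C.card * D = ∑ _c ∈ C, D := by rw [Finset.sum_const, smul_eq_mul]
      _ ≤ ∑ c ∈ C, (U c).card := Finset.sum_le_sum hball
      _ = (C.biUnion U).card := (Finset.card_biUnion hdisj).symm
      _ ≤ A.card := Finset.card_le_card (by
          intro z hz
          rw [Finset.mem_biUnion] at hz
          obtain ⟨c, -, hzc⟩ := hz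
          rw [hU] at hzc
          exact Finset.mem_filter.1 hzc |>.1)
  -- D ≥ 1
  have hD1 : 1 ≤ D := by
    rw [hD]
    refine le_trans ?_ (Finset.single_le_sum (f := fun t₁ => ∑ t₂ ∈ Finset.range (t + 1 - t₁),
        Nat.choose m₀ t₁ * Nat.choose (m - m₀) t₂ * L ^ t₁ * (L - w) ^ t₂)
        (fun _ _ => Nat.zero_le _) (Finset.mem_range.2 (Nat.succ_pos t)))
    refine le_trans ?_ (Finset.single_le_sum (f := fun t₂ =>
        Nat.choose m₀ 0 * Nat.choose (m - m₀) t₂ * L ^ 0 * (L - w) ^ t₂)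
        (fun _ _ => Nat.zero_le _) (Finset.mem_range.2
          (by rw [Nat.sub_zero]; exact Nat.succ_pos t)))
    simp
  -- conclude over ℚ
  have hDpos : (0 : ℚ) < (D : ℚ) := by exact_mod_cast hD1
  rw [le_div_iff₀ hDpos]
  have : (C.card : ℚ) * (D : ℚ) = ((C.card * D : ℕ) : ℚ) := by push_cast; ring
  rw [this]
  have hnum : ((bge L (w - 1) : ℚ)) ^ m₀ * ((bge L w : ℚ)) ^ (m - m₀)
      = ((bge L (w - 1) ^ m₀ * bge L w ^ (m - m₀) : ℕ) : ℚ) := by push_cast; ring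
  rw [hnum]
  exact_mod_cast hAcard ▸ hpack
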